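/- The relation ≺ on a family K of pairwise disjoint continua horizontally crossing the unit square, defined by K₁ ≺ K₂ iff max pr₂(K₁ ∩ ℓ) < max pr₂(K₂ ∩ ℓ) for some (equivalently, every) vertical segment ℓ = {x}×[0,1], is a strict total order on K. -/

import Mathlib

open Set

/-- The unit square `Q = [0,1]²`. -/
def unitSq : Set (ℝ × ℝ) := Icc (0:ℝ) 1 ×ˢ Icc (0:ℝ) 1

/-- The bottom horizontal side of `Q`. -/
def botSide : Set (ℝ × ℝ) := Icc (0:ℝ) 1 ×ˢ {(0:ℝ)}

/-- The top horizontal side of `Q`. -/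
def topSide : Set (ℝ × ℝ) := Icc (0:ℝ) 1 ×ˢ {(1:ℝ)}

/-- A continuum `K ⊆ Q` crosses the unit square horizontally: the two horizontal sides of
`Q` lie in different connected components of `Q ∖ K`. -/
def CrossesHorizontally (K : Set (ℝ × ℝ)) : Prop :=
  IsCompact K ∧ IsConnected K ∧ K ⊆ unitSq ∧ Disjoint K (botSide ∪ topSide) ∧
  ∀ p ∈ botSide, ∀ q ∈ topSide,
    connectedComponentIn (unitSq \ K) p ≠ connectedComponentIn (unitSq \ K) q

/-- The maximal height of `K` over the vertical segment `{x} × [0,1]`. -/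
noncomputable def maxHt (K : Set (ℝ × ℝ)) (x : ℝ) : ℝ := sSup {y : ℝ | (x, y) ∈ K}

/-- `K₁ ≺ K₂` iff over some vertical segment the maximal height of `K₁` is less than that
of `K₂`. -/
def HtLT (K₁ K₂ : Set (ℝ × ℝ)) : Prop := ∃ x ∈ Icc (0:ℝ) 1, maxHt K₁ x < maxHt K₂ x

-- Auxiliary lemmas


lemma convex_unitSq : Convex ℝ unitSq := (convex_Icc _ _).prod (convex_Icc _ _)

lemma isClosed_unitSq : IsClosed unitSq := isClosed_Icc.prod isClosed_Icc

lemma mem_unitSq {a b : ℝ} (ha : a ∈ Icc (0:ℝ) 1) (hb : b ∈ Icc (0:ℝ) 1) :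
    (a, b) ∈ unitSq := Set.mem_prod.mpr ⟨ha, hb⟩

lemma mem_botSide {a : ℝ} (ha : a ∈ Icc (0:ℝ) 1) : (a, (0:ℝ)) ∈ botSide :=
  Set.mem_prod.mpr ⟨ha, rfl⟩

lemma mem_topSide {a : ℝ} (ha : a ∈ Icc (0:ℝ) 1) : (a, (1:ℝ)) ∈ topSide :=
  Set.mem_prod.mpr ⟨ha, rfl⟩

lemma zero_mem_Icc01 : (0:ℝ) ∈ Icc (0:ℝ) 1 := ⟨le_refl 0, zero_le_one⟩
lemma one_mem_Icc01 : (1:ℝ) ∈ Icc (0:ℝ) 1 := ⟨zero_le_one, le_refl 1⟩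

/-- the slice of `K` over `x`. -/
def sliceSet (K : Set (ℝ × ℝ)) (x : ℝ) : Set ℝ := {y : ℝ | (x, y) ∈ K}

lemma maxHt_eq (K : Set (ℝ × ℝ)) (x : ℝ) : maxHt K x = sSup (sliceSet K x) := rfl

lemma sliceSet_subset {K : Set (ℝ × ℝ)} (hKQ : K ⊆ unitSq) (x : ℝ) :
    sliceSet K x ⊆ Icc (0:ℝ) 1 := fun _y hy => (hKQ hy).2

lemma sliceSet_nonempty {K : Set (ℝ × ℝ)} (hK : CrossesHorizontally K) {x : ℝ}
    (hx : x ∈ Icc (0:ℝ) 1) : (sliceSet K x).Nonempty := by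
  obtain ⟨hKc, hKconn, hKQ, hKd, hKsep⟩ := hK
  by_contra h
  rw [Set.not_nonempty_iff_eq_empty] at h
  have hseg : ({x} ×ˢ Icc (0:ℝ) 1 : Set (ℝ × ℝ)) ⊆ unitSq \ K := by
    rintro ⟨a, b⟩ hab
    obtain ⟨ha, hb⟩ := Set.mem_prod.mp hab
    rcases ha with rfl
    refine ⟨mem_unitSq hx hb, fun hK' => ?_⟩
    have : b ∈ sliceSet K a := hK'
    simp [h] at this
  have hpre : IsPreconnected ({x} ×ˢ Icc (0:ℝ) 1 : Set (ℝ × ℝ)) :=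
    ((convex_singleton x).prod (convex_Icc 0 1)).isPreconnected
  have h0 : ((x, (0:ℝ)) : ℝ × ℝ) ∈ ({x} ×ˢ Icc (0:ℝ) 1 : Set (ℝ × ℝ)) :=
    Set.mem_prod.mpr ⟨rfl, zero_mem_Icc01⟩
  have h1 : ((x, (1:ℝ)) : ℝ × ℝ) ∈ ({x} ×ˢ Icc (0:ℝ) 1 : Set (ℝ × ℝ)) :=
    Set.mem_prod.mpr ⟨rfl, one_mem_Icc01⟩
  have hsub := hpre.subset_connectedComponentIn h0 hseg
  exact hKsep _ (mem_botSide hx) _ (mem_topSide hx) (connectedComponentIn_eq (hsub h1))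

lemma sliceSet_isCompact {K : Set (ℝ × ℝ)} (hKc : IsCompact K) (hKQ : K ⊆ unitSq) (x : ℝ) :
    IsCompact (sliceSet K x) := by
  have hcl : IsClosed (sliceSet K x) := by
    have : sliceSet K x = (fun y : ℝ => ((x : ℝ), y)) ⁻¹' K := rfl
    rw [this]
    exact hKc.isClosed.preimage (continuous_const.prodMk continuous_id)
  exact (isCompact_Icc : IsCompact (Icc (0:ℝ) 1)).of_isClosed_subset hcl (sliceSet_subset hKQ x)

lemma maxHt_mem {K : Set (ℝ × ℝ)} (hK : CrossesHorizontally K) {x : ℝ}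
    (hx : x ∈ Icc (0:ℝ) 1) : (x, maxHt K x) ∈ K :=
  (sliceSet_isCompact hK.1 hK.2.2.1 x).sSup_mem (sliceSet_nonempty hK hx)

lemma maxHt_mem_Icc {K : Set (ℝ × ℝ)} (hK : CrossesHorizontally K) {x : ℝ}
    (hx : x ∈ Icc (0:ℝ) 1) : maxHt K x ∈ Icc (0:ℝ) 1 :=
  sliceSet_subset hK.2.2.1 x (maxHt_mem hK hx)

lemma le_maxHt {K : Set (ℝ × ℝ)} (hKQ : K ⊆ unitSq) {x y : ℝ} (hy : (x, y) ∈ K) :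
    y ≤ maxHt K x :=
  le_csSup ((bddAbove_Icc).mono (sliceSet_subset hKQ x)) hy

/-- Every point of `Q` strictly above the maximal height of `K` over its column lies in the
connected component of the top side. -/
lemma mem_topComp {K : Set (ℝ × ℝ)} (hK : CrossesHorizontally K) {x y : ℝ}
    (hx : x ∈ Icc (0:ℝ) 1) (hyQ : (x, y) ∈ unitSq) (hy : maxHt K x < y) :
    (x, y) ∈ connectedComponentIn (unitSq \ K) ((0:ℝ), (1:ℝ)) := by
  obtain ⟨hKc, hKconn, hKQ, hKd, hKsep⟩ := hK
  have hy1 : y ≤ 1 := hyQ.2.2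
  have htopQ : topSide ⊆ unitSq \ K := by
    rintro ⟨a, b⟩ hab
    obtain ⟨ha, hb⟩ := Set.mem_prod.mp hab
    rcases hb with rfl
    exact ⟨mem_unitSq ha one_mem_Icc01,
      fun hK' => Set.disjoint_left.mp hKd hK' (Or.inr (mem_topSide ha))⟩
  set s : Set (ℝ × ℝ) := topSide ∪ ({x} ×ˢ Icc y 1)
  have hsegQ : ({x} ×ˢ Icc y 1 : Set (ℝ × ℝ)) ⊆ unitSq \ K := by
    rintro ⟨a, b⟩ hab
    obtain ⟨ha, hb⟩ := Set.mem_prod.mp hab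
    rcases ha with rfl
    have hb0 : (0:ℝ) ≤ b := le_trans hyQ.2.1 hb.1
    refine ⟨mem_unitSq hx ⟨hb0, hb.2⟩, fun hK' => ?_⟩
    exact absurd (le_csSup ((bddAbove_Icc).mono
      (sliceSet_subset hKQ a)) hK') (not_le.mpr (lt_of_lt_of_le hy hb.1))
  have hsQ : s ⊆ unitSq \ K := union_subset htopQ hsegQ
  have hx1top : ((x, (1:ℝ)) : ℝ × ℝ) ∈ topSide := mem_topSide hx
  have hx1seg : ((x, (1:ℝ)) : ℝ × ℝ) ∈ ({x} ×ˢ Icc y 1 : Set (ℝ × ℝ)) :=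
    Set.mem_prod.mpr ⟨rfl, ⟨hy1, le_refl 1⟩⟩
  have hspre : IsPreconnected s := by
    apply IsPreconnected.union ((x, (1:ℝ)) : ℝ × ℝ) hx1top hx1seg
    · exact ((convex_Icc (0:ℝ) 1).prod (convex_singleton (1:ℝ))).isPreconnected
    · exact ((convex_singleton x).prod (convex_Icc y 1)).isPreconnected
  have h01 : ((0:ℝ), (1:ℝ)) ∈ s := Or.inl (mem_topSide zero_mem_Icc01)
  exact hspre.subset_connectedComponentIn h01 hsQ
    (Or.inr (Set.mem_prod.mpr ⟨rfl, ⟨le_refl y, hy1⟩⟩))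

lemma subset_diff_of_disjoint {K K' : Set (ℝ × ℝ)} (hKQ : K ⊆ unitSq)
    (hd : Disjoint K K') : K ⊆ unitSq \ K' :=
  fun p hp => ⟨hKQ hp, fun hp' => Set.disjoint_left.mp hd hp hp'⟩

/-- The key nesting lemma: for disjoint crossing continua, comparison of maximal heights is
independent of the column. -/
lemma nested {K₁ K₂ : Set (ℝ × ℝ)} (h1 : CrossesHorizontally K₁)
    (h2 : CrossesHorizontally K₂) (hd : Disjoint K₁ K₂) {x₀ : ℝ}
    (hx₀ : x₀ ∈ Icc (0:ℝ) 1) (hlt : maxHt K₁ x₀ < maxHt K₂ x₀) :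
    ∀ x ∈ Icc (0:ℝ) 1, maxHt K₁ x < maxHt K₂ x := by
  intro x hx
  rcases lt_trichotomy (maxHt K₁ x) (maxHt K₂ x) with h | h | h
  · exact h
  · exfalso
    have hm1 : (x, maxHt K₁ x) ∈ K₁ := maxHt_mem h1 hx
    have hm2 : (x, maxHt K₁ x) ∈ K₂ := by rw [h]; exact maxHt_mem h2 hx
    exact Set.disjoint_left.mp hd hm1 hm2
  · exfalso
    have h00Q1 : ((0:ℝ), (0:ℝ)) ∈ unitSq \ K₁ :=
      ⟨mem_unitSq zero_mem_Icc01 zero_mem_Icc01,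
        fun hK' => Set.disjoint_left.mp h1.2.2.2.1 hK' (Or.inl (mem_botSide zero_mem_Icc01))⟩
    have h00Q2 : ((0:ℝ), (0:ℝ)) ∈ unitSq \ K₂ :=
      ⟨mem_unitSq zero_mem_Icc01 zero_mem_Icc01,
        fun hK' => Set.disjoint_left.mp h2.2.2.2.1 hK' (Or.inl (mem_botSide zero_mem_Icc01))⟩
    set T₁ := connectedComponentIn (unitSq \ K₁) ((0:ℝ), (1:ℝ)) with hT₁
    set T₂ := connectedComponentIn (unitSq \ K₂) ((0:ℝ), (1:ℝ)) with hT₂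
    set B₁ := connectedComponentIn (unitSq \ K₁) ((0:ℝ), (0:ℝ)) with hB₁
    set B₂ := connectedComponentIn (unitSq \ K₂) ((0:ℝ), (0:ℝ)) with hB₂
    -- K₂ ⊆ T₁
    have hK₂T₁ : K₂ ⊆ T₁ := by
      have hmem : (x₀, maxHt K₂ x₀) ∈ T₁ :=
        mem_topComp h1 hx₀ (h2.2.2.1 (maxHt_mem h2 hx₀)) hlt
      have hsub := h2.2.1.isPreconnected.subset_connectedComponentIn (maxHt_mem h2 hx₀)
        (subset_diff_of_disjoint h2.2.2.1 hd.symm)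
      rw [hT₁, connectedComponentIn_eq hmem]
      exact hsub
    -- K₁ ⊆ T₂
    have hK₁T₂ : K₁ ⊆ T₂ := by
      have hmem : (x, maxHt K₁ x) ∈ T₂ :=
        mem_topComp h2 hx (h1.2.2.1 (maxHt_mem h1 hx)) h
      have hsub := h1.2.1.isPreconnected.subset_connectedComponentIn (maxHt_mem h1 hx)
        (subset_diff_of_disjoint h1.2.2.1 hd)
      rw [hT₂, connectedComponentIn_eq hmem]
      exact hsub
    -- components of bottom differ from top components
    have hBT₁ : B₁ ≠ T₁ :=
      h1.2.2.2.2 _ (mem_botSide zero_mem_Icc01) _ (mem_topSide zero_mem_Icc01)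
    have hBT₂ : B₂ ≠ T₂ :=
      h2.2.2.2.2 _ (mem_botSide zero_mem_Icc01) _ (mem_topSide zero_mem_Icc01)
    -- B₁ misses K₂, B₂ misses K₁
    have hK₂B₁ : ∀ z ∈ B₁, z ∉ K₂ := by
      intro z hz hzK
      exact hBT₁ ((connectedComponentIn_eq hz).trans (connectedComponentIn_eq (hK₂T₁ hzK)).symm)
    have hK₁B₂ : ∀ z ∈ B₂, z ∉ K₁ := by
      intro z hz hzK
      exact hBT₂ ((connectedComponentIn_eq hz).trans (connectedComponentIn_eq (hK₁T₂ hzK)).symm)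
    -- B₁ = B₂
    have hB₁sub : B₁ ⊆ unitSq \ K₂ := fun z hz =>
      ⟨(connectedComponentIn_subset _ _ hz).1, hK₂B₁ z hz⟩
    have hB₂sub : B₂ ⊆ unitSq \ K₁ := fun z hz =>
      ⟨(connectedComponentIn_subset _ _ hz).1, hK₁B₂ z hz⟩
    have hB₁B₂ : B₁ ⊆ B₂ := isPreconnected_connectedComponentIn.subset_connectedComponentIn
      (mem_connectedComponentIn h00Q1) hB₁sub
    have hB₂B₁ : B₂ ⊆ B₁ := isPreconnected_connectedComponentIn.subset_connectedComponentIn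
      (mem_connectedComponentIn h00Q2) hB₂sub
    have hBeq : B₂ = B₁ := subset_antisymm hB₂B₁ hB₁B₂
    -- closure of B₁ is contained in B₁ ∪ K₁ (and in B₁ ∪ K₂)
    have hcl : ∀ (K : Set (ℝ × ℝ)) (p : ℝ × ℝ), p ∈ unitSq \ K →
        closure (connectedComponentIn (unitSq \ K) p) ⊆
          connectedComponentIn (unitSq \ K) p ∪ K := by
      intro K p hp
      set C := connectedComponentIn (unitSq \ K) p with hC
      have hclosQ : closure C ⊆ unitSq :=
        closure_minimal (fun z hz => (connectedComponentIn_subset _ _ hz).1) isClosed_unitSq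
      intro z hz
      by_cases hzK : z ∈ K
      · exact Or.inr hzK
      · left
        have hins : insert z C ⊆ unitSq \ K := by
          rintro w (rfl | hw)
          · exact ⟨hclosQ hz, hzK⟩
          · exact connectedComponentIn_subset _ _ hw
        have hpre : IsPreconnected (insert z C) :=
          isPreconnected_connectedComponentIn.subset_closure
            (subset_insert z C)
            (insert_subset hz subset_closure)
        have : insert z C ⊆ C :=
          hpre.subset_connectedComponentIn
            (mem_insert_of_mem z (mem_connectedComponentIn hp)) hins
        exact this (mem_insert z C)
    have hcl1 : closure B₁ ⊆ B₁ ∪ K₁ := hcl K₁ _ h00Q1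
    have hcl2 : closure B₁ ⊆ B₁ ∪ K₂ := by
      rw [← hBeq]
      exact hcl K₂ _ h00Q2
    have hBclosed : IsClosed B₁ := by
      rw [← closure_subset_iff_isClosed]
      intro z hz
      rcases hcl1 hz with h1' | h1'
      · exact h1'
      rcases hcl2 hz with h2' | h2'
      · exact h2'
      · exact absurd h2' (Set.disjoint_left.mp hd h1')
    -- B₁ is open in unitSq via convexity of balls
    have hopen : ∀ b ∈ B₁, ∃ r > 0, Metric.ball b r ∩ unitSq ⊆ B₁ := by
      intro b hb
      have hbQK : b ∈ unitSq \ K₁ := connectedComponentIn_subset _ _ hb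
      obtain ⟨r, hr, hball⟩ := Metric.isOpen_iff.mp h1.1.isClosed.isOpen_compl b hbQK.2
      refine ⟨r, hr, ?_⟩
      have hconv : Convex ℝ (Metric.ball b r ∩ unitSq) := (convex_ball b r).inter convex_unitSq
      have hsub : Metric.ball b r ∩ unitSq ⊆ unitSq \ K₁ := fun z hz =>
        ⟨hz.2, fun hzK => hball hz.1 hzK⟩
      have hbmem : b ∈ Metric.ball b r ∩ unitSq := ⟨Metric.mem_ball_self hr, hbQK.1⟩
      have := hconv.isPreconnected.subset_connectedComponentIn hbmem hsub
      rwa [← connectedComponentIn_eq hb] at this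
    choose! rad hrad hradsub using hopen
    set U : Set (ℝ × ℝ) := ⋃ b ∈ B₁, Metric.ball b (rad b) with hU
    have hUopen : IsOpen U := isOpen_biUnion fun b _ => Metric.isOpen_ball
    have hBU : B₁ ⊆ U := fun b hb => mem_biUnion hb (Metric.mem_ball_self (hrad b hb))
    have hUQ : ∀ z, z ∈ U → z ∈ unitSq → z ∈ B₁ := by
      intro z hzU hzQ
      obtain ⟨b, hb, hz⟩ := mem_iUnion₂.mp hzU
      exact hradsub b hb ⟨hz, hzQ⟩
    -- K₁ is nonempty
    obtain ⟨y₁, hy₁⟩ := sliceSet_nonempty h1 zero_mem_Icc01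
    have hk1Q : ((0:ℝ), y₁) ∈ unitSq := h1.2.2.1 hy₁
    have hk1B : ((0:ℝ), y₁) ∉ B₁ := fun hmem =>
      (connectedComponentIn_subset _ _ hmem).2 hy₁
    -- preconnectedness contradiction
    have hQpre : IsPreconnected unitSq := convex_unitSq.isPreconnected
    obtain ⟨z, hzQ, hzU, hzC⟩ := hQpre U B₁ᶜ hUopen hBclosed.isOpen_compl
      (fun q hq => by
        by_cases hqB : q ∈ B₁
        · exact Or.inl (hBU hqB)
        · exact Or.inr hqB)
      ⟨((0:ℝ), (0:ℝ)), h00Q1.1, hBU (mem_connectedComponentIn h00Q1)⟩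
      ⟨((0:ℝ), y₁), hk1Q, hk1B⟩
    exact hzC (hUQ z hzU hzQ)

/-- On a family `𝒦` of pairwise disjoint continua horizontally crossing the
unit square, the relation `≺` (comparison of maximal heights over some, equivalently every,
vertical segment) is a strict total order: irreflexive, transitive, total on distinct
elements, and independent of the vertical segment used. -/
theorem htLT_strict_total_order
    (𝒦 : Set (Set (ℝ × ℝ)))
    (hcross : ∀ K ∈ 𝒦, CrossesHorizontally K)
    (hdisj : 𝒦.Pairwise Disjoint) :
    (∀ K ∈ 𝒦, ¬ HtLT K K) ∧
    (∀ K₁ ∈ 𝒦, ∀ K₂ ∈ 𝒦, ∀ K₃ ∈ 𝒦, HtLT K₁ K₂ → HtLT K₂ K₃ → HtLT K₁ K₃) ∧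
    (∀ K₁ ∈ 𝒦, ∀ K₂ ∈ 𝒦, K₁ ≠ K₂ → HtLT K₁ K₂ ∨ HtLT K₂ K₁) ∧
    (∀ K₁ ∈ 𝒦, ∀ K₂ ∈ 𝒦, HtLT K₁ K₂ → ∀ x ∈ Icc (0:ℝ) 1, maxHt K₁ x < maxHt K₂ x) := by

  have hmain : ∀ K₁ ∈ 𝒦, ∀ K₂ ∈ 𝒦, HtLT K₁ K₂ →
      ∀ x ∈ Icc (0:ℝ) 1, maxHt K₁ x < maxHt K₂ x := by
    rintro K₁ h₁ K₂ h₂ ⟨x₀, hx₀, hlt⟩ x hx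
    by_cases heq : K₁ = K₂
    · subst heq; exact absurd hlt (lt_irrefl _)
    · exact nested (hcross _ h₁) (hcross _ h₂) (hdisj h₁ h₂ heq) hx₀ hlt x hx
  refine ⟨?_, ?_, ?_, hmain⟩
  · rintro K _ ⟨x, _, h⟩
    exact lt_irrefl _ h
  · rintro K₁ h₁ K₂ h₂ K₃ h₃ ⟨x, hx, h12⟩ h23
    exact ⟨x, hx, lt_trans h12 (hmain K₂ h₂ K₃ h₃ h23 x hx)⟩
  · intro K₁ h₁ K₂ h₂ hne
    have hd := hdisj h₁ h₂ hne
    rcases lt_trichotomy (maxHt K₁ 0) (maxHt K₂ 0) with h | h | h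
    · exact Or.inl ⟨0, zero_mem_Icc01, h⟩
    · exfalso
      have hm1 : ((0:ℝ), maxHt K₁ 0) ∈ K₁ := maxHt_mem (hcross _ h₁) zero_mem_Icc01
      have hm2 : ((0:ℝ), maxHt K₁ 0) ∈ K₂ := by
        rw [h]; exact maxHt_mem (hcross _ h₂) zero_mem_Icc01
      exact Set.disjoint_left.mp hd hm1 hm2
    · exact Or.inr ⟨0, zero_mem_Icc01, h⟩
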